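/- Let ψ : ℝ² → ℝ be a continuous function that is nondecreasing in its first variable and nonincreasing in its second variable, and let α : ℝ → Set ℝ be a maximal monotone graph such that ψ(τ,χ) = 0 if and only if χ ∈ α(τ). Then for every (τ,χ) ∈ ℝ², ψ(τ,χ) > 0 if and only if χ < inf α(τ), and ψ(τ,χ) < 0 if and only if χ > sup α(τ). -/
import Mathlib


/-- sign of ψ versus the maximal monotone graph α. -/
theorem stmt_0 (ψ : ℝ → ℝ → ℝ) (α : ℝ → Set ℝ) (M : ℝ)
    (hψcont : Continuous fun p : ℝ × ℝ => ψ p.1 p.2)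
    (hψmono : ∀ χ : ℝ, Monotone fun τ => ψ τ χ)
    (hψanti : ∀ τ : ℝ, Antitone fun χ => ψ τ χ)
    (hmono : ∀ r₁ r₂ s₁ s₂ : ℝ, s₁ ∈ α r₁ → s₂ ∈ α r₂ → 0 ≤ (s₁ - s₂) * (r₁ - r₂))
    (hmax : ∀ ρ σ : ℝ, (∀ r s : ℝ, s ∈ α r → 0 ≤ (σ - s) * (ρ - r)) → σ ∈ α ρ)
    (hM : 0 < M) (hbdd : ∀ r s : ℝ, s ∈ α r → |s| ≤ M)
    (hdom : ∀ r : ℝ, (α r).Nonempty)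
    (hcompat : ∀ τ χ : ℝ, ψ τ χ = 0 ↔ χ ∈ α τ) :
    ∀ τ χ : ℝ, (0 < ψ τ χ ↔ χ < sInf (α τ)) ∧ (ψ τ χ < 0 ↔ sSup (α τ) < χ) := by
  intro τ χ
  have hcont : Continuous fun x : ℝ => ψ τ x :=
    hψcont.comp (Continuous.prodMk_right τ)
  have hclosed : IsClosed (α τ) := by
    have : α τ = (fun x : ℝ => ψ τ x) ⁻¹' {0} := by
      ext x
      simp [hcompat τ x]
    rw [this]
    exact isClosed_singleton.preimage hcont
  have hne : (α τ).Nonempty := hdom τ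
  have hbb : BddBelow (α τ) :=
    ⟨-M, fun s hs => neg_le_of_abs_le (hbdd τ s hs)⟩
  have hba : BddAbove (α τ) :=
    ⟨M, fun s hs => le_of_abs_le (hbdd τ s hs)⟩
  have hinf : sInf (α τ) ∈ α τ := hclosed.csInf_mem hne hbb
  have hsup : sSup (α τ) ∈ α τ := hclosed.csSup_mem hne hba
  have hψinf : ψ τ (sInf (α τ)) = 0 := (hcompat τ _).2 hinf
  have hψsup : ψ τ (sSup (α τ)) = 0 := (hcompat τ _).2 hsup
  have hanti := hψanti τ
  constructor
  · constructor
    · intro h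
      by_contra hle
      push_neg at hle
      rcases le_or_gt χ (sSup (α τ)) with h1 | h1
      · have h2 : ψ τ χ ≤ 0 := hψinf ▸ hanti hle
        linarith
      · have h2 : ψ τ χ ≤ 0 := hψsup ▸ hanti h1.le
        linarith
    · intro h
      have h1 : 0 ≤ ψ τ χ := hψinf ▸ hanti h.le
      rcases h1.lt_or_eq with h2 | h2
      · exact h2
      · exact absurd (csInf_le hbb ((hcompat τ χ).1 h2.symm)) (not_le.2 h)
  · constructor
    · intro h
      by_contra hle
      push_neg at hle
      rcases le_or_gt (sInf (α τ)) χ with h1 | h1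
      · have h2 : 0 ≤ ψ τ χ := hψsup ▸ hanti hle
        linarith
      · have h2 : 0 ≤ ψ τ χ := hψinf ▸ hanti h1.le
        linarith
    · intro h
      have h1 : ψ τ χ ≤ 0 := hψsup ▸ hanti h.le
      rcases h1.lt_or_eq with h2 | h2
      · exact h2
      · exact absurd (le_csSup hba ((hcompat τ χ).1 h2)) (not_le.2 h)
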